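/- There exist ε₀ ∈ (0, 1) and C > 0 such that for every ε ∈ (0, ε₀) there exist u₊ ∈ (0, 1/2) and u₋ ∈ (−1/2, 0) with the following properties: both partial derivatives ∂H̄⁰/∂θ and ∂H̄⁰/∂u vanish at (θ, u) = (0, u₊) and at (θ, u) = (0, u₋), and |u₊ − (ε/6)^{1/3}| ≤ C·ε^{2/3} and |u₋ + (ε/6)^{1/3}| ≤ C·ε^{2/3}. (These two hyperbolic equilibria of the averaged co-orbital problem approximate the Lagrange points L₂ and L₁ at the locations (0°, ±(ε/6)^{1/3} + O(ε^{2/3})) stated in the paper.) -/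

import Mathlib

open Real

/-- The reduced averaged Hamiltonian of the 1:1 mean-motion resonance of the
circular-planar restricted three-body problem at zero eccentricity:
`H̄⁰(θ,u) = -(1-ε)/(2(1+u)²) - u + ε(cos θ - ((1+u)⁴ + 1 - 2(1+u)²cos θ)^{-1/2})`. -/
noncomputable def Hbar (ε θ u : ℝ) : ℝ :=
  -(1 - ε) / (2 * (1 + u) ^ 2) - u +
    ε * (cos θ - 1 / Real.sqrt ((1 + u) ^ 4 + 1 - 2 * (1 + u) ^ 2 * cos θ))

/-- `∂H̄⁰/∂u` at `θ = 0`, written as a rational function, valid for `u > 0`. -/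
noncomputable def Pd (ε u : ℝ) : ℝ :=
  (1 - ε) / (1 + u) ^ 3 - 1 + ε / (2 * u ^ 2) - ε / (2 * (2 + u) ^ 2)

/-- `∂H̄⁰/∂u` at `θ = 0`, written as a rational function, valid for `u < 0`. -/
noncomputable def Md (ε u : ℝ) : ℝ :=
  (1 - ε) / (1 + u) ^ 3 - 1 - ε / (2 * u ^ 2) + ε / (2 * (2 + u) ^ 2)

lemma qpos {u : ℝ} (h1 : -(1/2) < u) (h0 : u ≠ 0) :
    (0:ℝ) < (1 + u) ^ 4 + 1 - 2 * (1 + u) ^ 2 := by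
  have e : (1 + u) ^ 4 + 1 - 2 * (1 + u) ^ 2 = (u * (2 + u)) ^ 2 := by ring
  rw [e]
  exact pow_two_pos_of_ne_zero (mul_ne_zero h0 (by intro h; nlinarith))

lemma sqrt_q {u : ℝ} (h1 : -(1/2) < u) :
    Real.sqrt ((1 + u) ^ 4 + 1 - 2 * (1 + u) ^ 2) = |u| * (2 + u) := by
  have e : (1 + u) ^ 4 + 1 - 2 * (1 + u) ^ 2 = (u * (2 + u)) ^ 2 := by ring
  rw [e, Real.sqrt_sq_eq_abs, abs_mul, abs_of_pos (by linarith : (0:ℝ) < 2 + u)]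

/-- The partial derivative of `H̄⁰` in `θ` vanishes at `θ = 0`. -/
lemma theta_deriv (ε : ℝ) {u : ℝ} (h1 : -(1/2) < u) (h0 : u ≠ 0) :
    HasDerivAt (fun θ => Hbar ε θ u) 0 0 := by
  have hq : HasDerivAt (fun θ : ℝ => (1 + u) ^ 4 + 1 - 2 * (1 + u) ^ 2 * Real.cos θ)
      (2 * (1 + u) ^ 2 * Real.sin 0) 0 := by
    have := ((Real.hasDerivAt_cos 0).const_mul (2 * (1 + u) ^ 2)).const_sub ((1 + u) ^ 4 + 1)
    simpa [mul_comm] using this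
  have hq0 : ((1 + u) ^ 4 + 1 - 2 * (1 + u) ^ 2 * Real.cos 0) ≠ 0 := by
    rw [Real.cos_zero]; exact ne_of_gt (by simpa using qpos h1 h0)
  have hs : HasDerivAt (fun θ : ℝ => Real.sqrt ((1 + u) ^ 4 + 1 - 2 * (1 + u) ^ 2 * Real.cos θ))
      ((2 * (1 + u) ^ 2 * Real.sin 0) /
        (2 * Real.sqrt ((1 + u) ^ 4 + 1 - 2 * (1 + u) ^ 2 * Real.cos 0))) 0 :=
    hq.sqrt hq0
  have hsne : Real.sqrt ((1 + u) ^ 4 + 1 - 2 * (1 + u) ^ 2 * Real.cos 0) ≠ 0 := by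
    rw [Real.cos_zero]
    have := qpos h1 h0
    exact ne_of_gt (Real.sqrt_pos.2 (by linarith))
  have hinv := (hasDerivAt_const (0:ℝ) (1:ℝ)).div hs hsne
  have hcos := Real.hasDerivAt_cos 0
  have h := ((hcos.sub hinv).const_mul ε).const_add (-(1 - ε) / (2 * (1 + u) ^ 2) - u)
  have heq : (fun θ => Hbar ε θ u) = fun θ =>
      -(1 - ε) / (2 * (1 + u) ^ 2) - u +
        ε * (Real.cos θ - 1 / Real.sqrt ((1 + u) ^ 4 + 1 - 2 * (1 + u) ^ 2 * Real.cos θ)) := by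
    funext θ; rfl
  rw [heq]
  refine h.congr_deriv (Eq.symm ?_)
  simp [Real.sin_zero]

/-- The partial derivative of `H̄⁰` in `u` at `θ = 0`. -/
lemma u_deriv (ε : ℝ) {u : ℝ} (h1 : -(1/2) < u) (h0 : u ≠ 0) :
    HasDerivAt (fun u => Hbar ε 0 u)
      ((1 - ε) / (1 + u) ^ 3 - 1 +
        ε * ((4 * (1 + u) ^ 3 - 4 * (1 + u)) /
          (2 * (|u| * (2 + u)) ^ 3))) u := by
  have h1u : (0 : ℝ) < 1 + u := by linarith
  have hqp := qpos h1 h0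
  have hid : HasDerivAt (fun v : ℝ => 1 + v) 1 u := by
    simpa using (hasDerivAt_id u).const_add 1
  have hden : HasDerivAt (fun v : ℝ => 2 * (1 + v) ^ 2) (2 * (2 * (1 + u))) u := by
    simpa using ((hid.pow 2).const_mul 2)
  have hdenne : 2 * (1 + u) ^ 2 ≠ 0 := by positivity
  have ht1 := (hasDerivAt_const u (-(1 - ε))).div hden hdenne
  have ht1' : HasDerivAt (fun v : ℝ => -(1 - ε) / (2 * (1 + v) ^ 2))
      ((1 - ε) / (1 + u) ^ 3) u := by
    refine ht1.congr_deriv (Eq.symm ?_)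
    field_simp
    ring
  have hq : HasDerivAt (fun v : ℝ => (1 + v) ^ 4 + 1 - 2 * (1 + v) ^ 2)
      (4 * (1 + u) ^ 3 - 2 * (2 * (1 + u))) u := by
    have h4 : HasDerivAt (fun v : ℝ => (1 + v) ^ 4) (4 * (1 + u) ^ 3) u := by
      exact (hid.pow 4).congr_deriv (by norm_num)
    exact ((h4.add_const 1).sub ((hid.pow 2).const_mul 2)).congr_deriv (by norm_num)
  have hs := hq.sqrt (ne_of_gt hqp)
  set s := Real.sqrt ((1 + u) ^ 4 + 1 - 2 * (1 + u) ^ 2) with hsdef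
  have hspos : 0 < s := Real.sqrt_pos.2 hqp
  have hinv := (hasDerivAt_const u (1:ℝ)).div hs (ne_of_gt hspos)
  have hinv' : HasDerivAt (fun y : ℝ => 1 / Real.sqrt ((1 + y) ^ 4 + 1 - 2 * (1 + y) ^ 2))
      (-((4 * (1 + u) ^ 3 - 4 * (1 + u)) / (2 * s ^ 3))) u := by
    have hs2 : s ^ 2 = (1 + u) ^ 4 + 1 - 2 * (1 + u) ^ 2 := Real.sq_sqrt hqp.le
    have hsne : s ≠ 0 := ne_of_gt hspos
    refine hinv.congr_deriv (Eq.symm ?_)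
    rw [← hsdef]
    field_simp
    ring
  have hfinal := ((ht1'.sub (hasDerivAt_id u)).add
    (((hasDerivAt_const u (1:ℝ)).sub hinv').const_mul ε))
  have heq : (fun u => Hbar ε 0 u) = fun v : ℝ =>
      (-(1 - ε) / (2 * (1 + v) ^ 2) - v) +
        ε * (1 - 1 / Real.sqrt ((1 + v) ^ 4 + 1 - 2 * (1 + v) ^ 2)) := by
    funext v; simp [Hbar]
  rw [heq]
  have hsq : s = |u| * (2 + u) := sqrt_q h1
  refine hfinal.congr_deriv (Eq.symm ?_)
  rw [hsq]
  ring

lemma Pd_eq (ε : ℝ) {u : ℝ} (h0 : 0 < u) :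
    (1 - ε) / (1 + u) ^ 3 - 1 +
        ε * ((4 * (1 + u) ^ 3 - 4 * (1 + u)) / (2 * (|u| * (2 + u)) ^ 3)) = Pd ε u := by
  rw [abs_of_pos h0]
  unfold Pd
  have h1 : (0:ℝ) < 1 + u := by linarith
  have h2 : (0:ℝ) < 2 + u := by linarith
  field_simp
  ring

lemma Md_eq (ε : ℝ) {u : ℝ} (hneg : u < 0) (h1 : -(1/2) < u) :
    (1 - ε) / (1 + u) ^ 3 - 1 +
        ε * ((4 * (1 + u) ^ 3 - 4 * (1 + u)) / (2 * (|u| * (2 + u)) ^ 3)) = Md ε u := by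
  rw [abs_of_neg hneg]
  unfold Md
  have h1u : (0:ℝ) < 1 + u := by linarith
  have h2 : (0:ℝ) < 2 + u := by linarith
  have h0 : u ≠ 0 := ne_of_lt hneg
  field_simp
  ring

lemma Pd_contOn (ε a b : ℝ) (ha : 0 < a) : ContinuousOn (Pd ε) (Set.Icc a b) := by
  have cA : ContinuousOn (fun u : ℝ => (1 - ε) / (1 + u) ^ 3) (Set.Icc a b) :=
    continuousOn_const.div (by fun_prop) (fun x hx => by
      have h := hx.1
      have h2 : (0:ℝ) < 1 + x := by linarith
      positivity)
  have cB : ContinuousOn (fun u : ℝ => ε / (2 * u ^ 2)) (Set.Icc a b) :=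
    continuousOn_const.div (by fun_prop) (fun x hx => by
      have h := hx.1
      have h2 : (0:ℝ) < x := lt_of_lt_of_le ha h
      positivity)
  have cC : ContinuousOn (fun u : ℝ => ε / (2 * (2 + u) ^ 2)) (Set.Icc a b) :=
    continuousOn_const.div (by fun_prop) (fun x hx => by
      have h := hx.1
      have h2 : (0:ℝ) < 2 + x := by linarith
      positivity)
  exact ((cA.sub continuousOn_const).add cB).sub cC

lemma Md_contOn (ε a b : ℝ) (hb : b < 0) (ha : -(1/2) < a) :
    ContinuousOn (Md ε) (Set.Icc a b) := by
  have cA : ContinuousOn (fun u : ℝ => (1 - ε) / (1 + u) ^ 3) (Set.Icc a b) :=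
    continuousOn_const.div (by fun_prop) (fun x hx => by
      have h := hx.1
      have h2 : (0:ℝ) < 1 + x := by linarith
      positivity)
  have cB : ContinuousOn (fun u : ℝ => ε / (2 * u ^ 2)) (Set.Icc a b) :=
    continuousOn_const.div (by fun_prop) (fun x hx => by
      have h := hx.2
      have hxne : x ≠ 0 := by intro hh; rw [hh] at h; linarith
      positivity)
  have cC : ContinuousOn (fun u : ℝ => ε / (2 * (2 + u) ^ 2)) (Set.Icc a b) :=
    continuousOn_const.div (by fun_prop) (fun x hx => by
      have h := hx.1
      have h2 : (0:ℝ) < 2 + x := by linarith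
      positivity)
  exact ((cA.sub continuousOn_const).sub cB).add cC
lemma Ppos {r : ℝ} (hr0 : 0 < r) (hr1 : r < 1/100) : 0 < Pd (6*r^3) (r - 4*r^2) := by
  have hx0 : 0 < r - 4*r^2 := by nlinarith
  have hε1 : 6*r^3 < 1 := by nlinarith
  have hε0 : (0:ℝ) < 6*r^3 := by positivity
  have h1 : (1-6*r^3)*(1-3*(r-4*r^2)) ≤ (1-6*r^3)/(1+(r-4*r^2))^3 := by
    rw [le_div_iff₀ (by positivity)]
    nlinarith [mul_le_mul_of_nonneg_left
      (show (1-3*(r-4*r^2))*(1+(r-4*r^2))^3 ≤ 1 by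
        nlinarith [pow_pos hx0 2, pow_pos hx0 3, pow_pos hx0 4])
      (show (0:ℝ) ≤ 1-6*r^3 by linarith)]
  have h3 : 3*r + 24*r^2 ≤ 6*r^3/(2*(r - 4*r^2)^2) := by
    rw [le_div_iff₀ (by positivity)]
    nlinarith [mul_pos (pow_pos hr0 5) (show (0:ℝ) < 288 - 768*r by linarith)]
  have h2 : 6*r^3/(2*(2+(r - 4*r^2))^2) ≤ 6*r^3/8 := by
    rw [div_le_div_iff₀ (by positivity) (by norm_num)]
    nlinarith [mul_nonneg hε0.le (show (0:ℝ) ≤ 2*(2+(r-4*r^2))^2 - 8 by nlinarith)]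
  have hfin : 0 < (1-6*r^3)*(1-3*(r-4*r^2)) - 1 + (3*r + 24*r^2) - 6*r^3/8 := by
    have hcube : r^3 < 1/100^3 := by nlinarith [mul_pos hr0 hr0, sq_nonneg (r + 1/100)]
    have hr3 : r^3 < r^2 := by nlinarith
    have hr5 : r^5 < r^2/100^3 := by
      nlinarith [mul_lt_mul_of_pos_left hcube (pow_pos hr0 2)]
    nlinarith [pow_pos hr0 2, pow_pos hr0 4]
  unfold Pd
  linarith

lemma Pneg {r : ℝ} (hr0 : 0 < r) (hr1 : r < 1/100) : Pd (6*r^3) (r + 4*r^2) < 0 := by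
  have hx0 : 0 < r + 4*r^2 := by positivity
  have hε1 : 6*r^3 < 1 := by nlinarith
  have hε0 : (0:ℝ) < 6*r^3 := by positivity
  have g1 : (1-6*r^3)/(1+(r + 4*r^2))^3 ≤ (1-6*r^3)*(1-3*(r+4*r^2)+9*(r+4*r^2)^2) := by
    rw [div_le_iff₀ (by positivity)]
    nlinarith [mul_le_mul_of_nonneg_left
      (show 1 ≤ (1-3*(r+4*r^2)+9*(r+4*r^2)^2)*(1+(r+4*r^2))^3 by
        nlinarith [pow_pos hx0 2, pow_pos hx0 3, pow_pos hx0 4, pow_pos hx0 5])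
      (show (0:ℝ) ≤ 1-6*r^3 by linarith)]
  have g2 : 6*r^3/(2*(r + 4*r^2)^2) ≤ 3*r := by
    rw [div_le_iff₀ (by positivity)]
    nlinarith [mul_pos (mul_pos hr0 (pow_pos hr0 3)) (show (0:ℝ) < 48 + 96*r by linarith)]
  have g3 : (0:ℝ) < 6*r^3/(2*(2+(r + 4*r^2))^2) := by positivity
  have gfin : (1-6*r^3)*(1-3*(r+4*r^2)+9*(r+4*r^2)^2) - 1 + 3*r < 0 := by
    have hX : (0:ℝ) < 1-3*(r+4*r^2)+9*(r+4*r^2)^2 := by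
      nlinarith [sq_nonneg (1 - 6*(r+4*r^2))]
    have key : (1-6*r^3)*(1-3*(r+4*r^2)+9*(r+4*r^2)^2)
        ≤ 1-3*(r+4*r^2)+9*(r+4*r^2)^2 := by
      nlinarith [mul_pos hε0 hX]
    have expand : 1-3*(r+4*r^2)+9*(r+4*r^2)^2 = 1-3*r-3*r^2+72*r^3+144*r^4 := by ring
    have htail : -3*r^2+72*r^3+144*r^4 < 0 := by
      nlinarith [mul_pos hr0 hr0, mul_pos (mul_pos hr0 hr0) hr0,
        mul_pos (mul_pos (mul_pos hr0 hr0) hr0) hr0]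
    linarith [key, expand ▸ key]
  unfold Pd
  linarith

lemma Mneg {r : ℝ} (hr0 : 0 < r) (hr1 : r < 1/100) : Md (6*r^3) (-(r - 4*r^2)) < 0 := by
  have hx0 : 0 < r - 4*r^2 := by nlinarith
  have hx1 : r - 4*r^2 < 1/100 := by nlinarith
  have hε1 : 6*r^3 < 1 := by nlinarith
  have hε0 : (0:ℝ) < 6*r^3 := by positivity
  have e1 : (1:ℝ) + -(r - 4*r^2) = 1 - (r - 4*r^2) := by ring
  have e2 : (2:ℝ) + -(r - 4*r^2) = 2 - (r - 4*r^2) := by ring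
  have e3 : (-(r - 4*r^2))^2 = (r - 4*r^2)^2 := by ring
  have m1 : (1-6*r^3)/(1-(r - 4*r^2))^3 ≤ (1-6*r^3)*(1+3*(r-4*r^2)+12*(r-4*r^2)^2) := by
    rw [div_le_iff₀ (by nlinarith : (0:ℝ) < (1-(r - 4*r^2))^3)]
    nlinarith [mul_le_mul_of_nonneg_left
      (show 1 ≤ (1+3*(r-4*r^2)+12*(r-4*r^2)^2)*(1-(r-4*r^2))^3 by
        nlinarith [pow_pos hx0 2, pow_pos hx0 3, pow_pos hx0 4, pow_pos hx0 5])
      (show (0:ℝ) ≤ 1-6*r^3 by linarith)]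
  have m2 : 3*r + 24*r^2 ≤ 6*r^3/(2*(r - 4*r^2)^2) := by
    rw [le_div_iff₀ (by positivity)]
    nlinarith [mul_pos (pow_pos hr0 5) (show (0:ℝ) < 288 - 768*r by linarith)]
  have m3 : 6*r^3/(2*(2-(r - 4*r^2))^2) ≤ 6*r^3/6 := by
    rw [div_le_div_iff₀ (by nlinarith : (0:ℝ) < 2*(2-(r - 4*r^2))^2) (by norm_num)]
    nlinarith [mul_nonneg hε0.le (show (0:ℝ) ≤ 2*(2-(r-4*r^2))^2 - 6 by nlinarith)]
  have mfin : (1-6*r^3)*(1+3*(r-4*r^2)+12*(r-4*r^2)^2) - 1 - (3*r + 24*r^2) + 6*r^3/6 < 0 := by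
    have hX : (0:ℝ) < 1+3*(r-4*r^2)+12*(r-4*r^2)^2 := by positivity
    have key : (1-6*r^3)*(1+3*(r-4*r^2)+12*(r-4*r^2)^2)
        ≤ 1+3*(r-4*r^2)+12*(r-4*r^2)^2 := by
      nlinarith [mul_pos hε0 hX]
    have expand : 1+3*(r-4*r^2)+12*(r-4*r^2)^2 = 1+3*r-96*r^3+192*r^4 := by ring
    have htail : -24*r^2 - 95*r^3 + 192*r^4 < 0 := by
      nlinarith [mul_pos hr0 hr0, mul_pos (mul_pos hr0 hr0) hr0,
        mul_pos (mul_pos (mul_pos hr0 hr0) hr0) hr0]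
    linarith [key, expand ▸ key]
  unfold Md
  rw [e1, e2, e3]
  linarith

lemma Mpos {r : ℝ} (hr0 : 0 < r) (hr1 : r < 1/100) : 0 < Md (6*r^3) (-(r + 4*r^2)) := by
  have hx0 : 0 < r + 4*r^2 := by positivity
  have hx1 : r + 4*r^2 < 2/100 := by nlinarith
  have hε1 : 6*r^3 < 1 := by nlinarith
  have hε0 : (0:ℝ) < 6*r^3 := by positivity
  have e1 : (1:ℝ) + -(r + 4*r^2) = 1 - (r + 4*r^2) := by ring
  have e2 : (2:ℝ) + -(r + 4*r^2) = 2 - (r + 4*r^2) := by ring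
  have e3 : (-(r + 4*r^2))^2 = (r + 4*r^2)^2 := by ring
  have n1 : (1-6*r^3)*(1+3*(r+4*r^2)) ≤ (1-6*r^3)/(1-(r + 4*r^2))^3 := by
    rw [le_div_iff₀ (by nlinarith : (0:ℝ) < (1-(r + 4*r^2))^3)]
    nlinarith [mul_le_mul_of_nonneg_left
      (show (1+3*(r+4*r^2))*(1-(r+4*r^2))^3 ≤ 1 by
        nlinarith [pow_pos hx0 2, pow_pos hx0 3, pow_pos hx0 4])
      (show (0:ℝ) ≤ 1-6*r^3 by linarith)]
  have n2 : 6*r^3/(2*(r + 4*r^2)^2) ≤ 3*r := by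
    rw [div_le_iff₀ (by positivity)]
    nlinarith [mul_pos (mul_pos hr0 (pow_pos hr0 3)) (show (0:ℝ) < 48 + 96*r by linarith)]
  have n3 : (0:ℝ) ≤ 6*r^3/(2*(2-(r + 4*r^2))^2) := by
    apply div_nonneg hε0.le
    nlinarith
  have nfin : 0 < (1-6*r^3)*(1+3*(r+4*r^2)) - 1 - 3*r := by
    have hX : 1+3*(r+4*r^2) ≤ 2 := by nlinarith
    have key : 6*r^3*(1+3*(r+4*r^2)) ≤ 6*r^3*2 :=
      mul_le_mul_of_nonneg_left hX hε0.le
    have expand : (1-6*r^3)*(1+3*(r+4*r^2))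
        = 1+3*r+12*r^2 - 6*r^3*(1+3*(r+4*r^2)) := by ring
    rw [expand]
    have : 12*r^3 < 12*r^2 := by nlinarith
    linarith
  unfold Md
  rw [e1, e2, e3]
  linarith

/-- Approximation of the Lagrange points `L₁` and `L₂` by equilibria of the averaged
co-orbital problem: for small `ε` there are equilibria `(0, u₊)` and `(0, u₋)` of `H̄⁰`
with `u_± = ±(ε/6)^{1/3} + O(ε^{2/3})`. -/
theorem L1_L2_equilibria_of_averaged :
    ∃ ε₀ ∈ Set.Ioo (0 : ℝ) 1, ∃ C > (0 : ℝ), ∀ ε ∈ Set.Ioo (0 : ℝ) ε₀,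
      ∃ up ∈ Set.Ioo (0 : ℝ) (1 / 2), ∃ um ∈ Set.Ioo (-(1 / 2) : ℝ) 0,
        HasDerivAt (fun θ => Hbar ε θ up) 0 0 ∧
        HasDerivAt (fun u => Hbar ε 0 u) 0 up ∧
        HasDerivAt (fun θ => Hbar ε θ um) 0 0 ∧
        HasDerivAt (fun u => Hbar ε 0 u) 0 um ∧
        |up - (ε / 6) ^ ((1 : ℝ) / 3)| ≤ C * ε ^ ((2 : ℝ) / 3) ∧
        |um + (ε / 6) ^ ((1 : ℝ) / 3)| ≤ C * ε ^ ((2 : ℝ) / 3) := by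
  refine ⟨3/500000, by norm_num, 4, by norm_num, ?_⟩
  rintro ε ⟨hε0, hε1⟩
  obtain ⟨r, hrdef⟩ : ∃ r : ℝ, r = (ε/6) ^ ((1:ℝ)/3) := ⟨_, rfl⟩
  rw [← hrdef]
  have hε6 : (0:ℝ) < ε/6 := by linarith
  have hrpos : 0 < r := hrdef ▸ Real.rpow_pos_of_pos hε6 _
  have hr3 : r ^ 3 = ε / 6 := by
    rw [hrdef, ← Real.rpow_natCast ((ε/6) ^ ((1:ℝ)/3)) 3, ← Real.rpow_mul hε6.le]
    norm_num
  have hεr : ε = 6 * r ^ 3 := by rw [hr3]; ring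
  have hr1 : r < 1/100 := by
    by_contra h
    push_neg at h
    have := pow_le_pow_left₀ (by norm_num : (0:ℝ) ≤ 1/100) h 3
    rw [hr3] at this
    norm_num at this
    linarith
  have hbnd : 4 * r ^ 2 ≤ 4 * ε ^ ((2:ℝ)/3) := by
    have hr2 : r ^ 2 = (ε/6) ^ ((2:ℝ)/3) := by
      rw [hrdef, ← Real.rpow_natCast ((ε/6) ^ ((1:ℝ)/3)) 2, ← Real.rpow_mul hε6.le]
      norm_num
    have : (ε/6) ^ ((2:ℝ)/3) ≤ ε ^ ((2:ℝ)/3) :=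
      Real.rpow_le_rpow hε6.le (by linarith) (by norm_num)
    rw [hr2]
    linarith
  have ha0 : 0 < r - 4*r^2 := by nlinarith
  have hab : r - 4*r^2 ≤ r + 4*r^2 := by nlinarith [sq_nonneg r]
  have hbhalf : r + 4*r^2 < 1/2 := by nlinarith
  -- positive equilibrium
  have hPa : 0 < Pd ε (r - 4*r^2) := by rw [hεr]; exact Ppos hrpos hr1
  have hPb : Pd ε (r + 4*r^2) < 0 := by rw [hεr]; exact Pneg hrpos hr1
  have hivt := intermediate_value_Icc' hab (Pd_contOn ε _ _ ha0)
  obtain ⟨up, hupmem, hupz⟩ := hivt ⟨hPb.le, hPa.le⟩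
  obtain ⟨hup1, hup2⟩ := hupmem
  have hup0 : 0 < up := lt_of_lt_of_le ha0 hup1
  have huph : up < 1/2 := lt_of_le_of_lt hup2 hbhalf
  have hupne : up ≠ 0 := ne_of_gt hup0
  have huphalf : -(1/2) < up := by linarith
  -- negative equilibrium
  have hMa : 0 < Md ε (-(r + 4*r^2)) := by rw [hεr]; exact Mpos hrpos hr1
  have hMb : Md ε (-(r - 4*r^2)) < 0 := by rw [hεr]; exact Mneg hrpos hr1
  have hab' : -(r + 4*r^2) ≤ -(r - 4*r^2) := by linarith
  have hivt' := intermediate_value_Icc' hab'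
    (Md_contOn ε _ _ (by linarith : -(r - 4*r^2) < 0) (by nlinarith : -(1/2) < -(r + 4*r^2)))
  obtain ⟨um, hummem, humz⟩ := hivt' ⟨hMb.le, hMa.le⟩
  obtain ⟨hum1, hum2⟩ := hummem
  have hum0 : um < 0 := lt_of_le_of_lt hum2 (by linarith)
  have humh : -(1/2) < um := lt_of_lt_of_le (by nlinarith) hum1
  have humne : um ≠ 0 := ne_of_lt hum0
  refine ⟨up, ⟨hup0, huph⟩, um, ⟨humh, hum0⟩, ?_, ?_, ?_, ?_, ?_, ?_⟩
  · exact theta_deriv ε huphalf hupne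
  · have h := u_deriv ε huphalf hupne
    rwa [Pd_eq ε hup0, hupz] at h
  · exact theta_deriv ε humh humne
  · have h := u_deriv ε humh humne
    rwa [Md_eq ε hum0 humh, humz] at h
  · have : |up - r| ≤ 4*r^2 := abs_le.2 ⟨by linarith, by linarith⟩
    linarith
  · have : |um + r| ≤ 4*r^2 := abs_le.2 ⟨by linarith, by linarith⟩
    linarith
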